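/- Let n₁ ≥ 1 and K = 0, and let (λ₁,…,λ_{n₁}, μ₁,…,μ_{n₁}) be a real-analytic solution of the system (ODE) on an open interval I such that all the μᵢ coincide: μ₁ = μ₂ = ⋯ = μ_{n₁} on I (i.e., the linear relation μᵢ = φλᵢ + ψ holds with φ ≡ 0). Then τ ≡ 0 on I. -/

import Mathlib

/-- Lemma (`vp ≠ 0`, case φ ≡ 0): a real-analytic solution of the ODE system
with `K = 0` in which all the `μᵢ` coincide must have `τ ≡ 0`. -/
theorem stmt_9 (n₁ : ℕ) (hn : 1 ≤ n₁) (K : ℝ) (hK : K = 0)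
    (I : Set ℝ) (hI : IsOpen I) (hIconn : I.OrdConnected)
    (lam mu : Fin n₁ → ℝ → ℝ)
    (hlam : ∀ i, AnalyticOnNhd ℝ (lam i) I)
    (hmu : ∀ i, AnalyticOnNhd ℝ (mu i) I)
    (tau : ℝ → ℝ) (htau : ∀ t, tau t = (2/3) * ∑ i, lam i t)
    (hode1 : ∀ i, ∀ t ∈ I, HasDerivAt (lam i) ((tau t / 2 + lam i t) * mu i t) t)
    (hode2 : ∀ i, ∀ t ∈ I,
      HasDerivAt (mu i) ((mu i t) ^ 2 - tau t / 2 * lam i t + K) t)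
    (hode3 : ∀ t ∈ I,
      -(deriv (deriv tau) t) + deriv tau t * (∑ i, mu i t)
        + tau t * ((tau t) ^ 2 / 4 - ((n₁ : ℝ) + 1) * K + ∑ i, (lam i t) ^ 2) = 0)
    (hall : ∀ i j : Fin n₁, ∀ t ∈ I, mu i t = mu j t) :
    ∀ t ∈ I, tau t = 0 := by
  subst hK
  set N : ℝ := (n₁ : ℝ) with hNdef
  have hN1 : (1:ℝ) ≤ N := by rw [hNdef]; exact_mod_cast hn
  have hNne : N ≠ 0 := by linarith
  set i0 : Fin n₁ := ⟨0, hn⟩ with hi0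
  by_contra hcon
  push_neg at hcon
  obtain ⟨t₀, ht₀I, ht₀⟩ := hcon
  set U : Set ℝ := {t | t ∈ I ∧ tau t ≠ 0} with hUdef
  -- derivative of tau on I
  have hdtau : ∀ t ∈ I, HasDerivAt tau
      ((2/3) * ∑ i, (tau t / 2 + lam i t) * mu i t) t := by
    intro t ht
    have h1 : HasDerivAt (fun s => (2/3 : ℝ) * ∑ i, lam i s)
        ((2/3) * ∑ i, (tau t / 2 + lam i t) * mu i t) t :=
      (HasDerivAt.fun_sum fun i _ => hode1 i t ht).const_mul (2/3 : ℝ)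
    exact h1.congr_of_eventuallyEq (Filter.Eventually.of_forall fun s => htau s)
  have hUopen : IsOpen U := by
    rw [isOpen_iff_mem_nhds]
    intro t ht
    have hc : ContinuousAt tau t := (hdtau t ht.1).continuousAt
    have h1 : ∀ᶠ s in nhds t, tau s ≠ 0 := hc.eventually_ne ht.2
    have h2 : ∀ᶠ s in nhds t, s ∈ I := hI.eventually_mem ht.1
    filter_upwards [h1, h2] with s hs1 hs2
    exact ⟨hs2, hs1⟩
  have ht₀U : t₀ ∈ U := ⟨ht₀I, ht₀⟩
  -- all lam coincide on U
  have hlamEq : ∀ i, ∀ t ∈ U, lam i t = lam i0 t := by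
    intro i t ht
    have hm : mu i0 =ᶠ[nhds t] mu i :=
      Filter.eventuallyEq_of_mem (hI.mem_nhds ht.1) (fun s hs => hall i0 i s hs)
    have h1 : HasDerivAt (mu i0) ((mu i t) ^ 2 - tau t / 2 * lam i t + 0) t :=
      (hode2 i t ht.1).congr_of_eventuallyEq hm
    have h2 := hode2 i0 t ht.1
    have huniq := h1.unique h2
    have hmm : mu i t = mu i0 t := hall i i0 t ht.1
    rw [hmm] at huniq
    have h3 : tau t / 2 * lam i t = tau t / 2 * lam i0 t := by linarith
    exact mul_left_cancel₀ (div_ne_zero ht.2 two_ne_zero) h3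
  -- tau in terms of lam i0 on U
  have hxU : ∀ t ∈ U, tau t = (2/3) * N * lam i0 t := by
    intro t ht
    have hs : ∑ i, lam i t = N * lam i0 t := by
      rw [Finset.sum_congr rfl (fun i _ => hlamEq i t ht)]
      simp [hNdef, mul_comm]
    rw [htau, hs]; ring
  have hlU : ∀ t ∈ U, lam i0 t ≠ 0 := by
    intro t ht hl0
    exact ht.2 (by rw [hxU t ht, hl0]; ring)
  -- F := deriv tau as explicit function
  set F : ℝ → ℝ := fun s => (2/3) * ∑ i, (tau s / 2 + lam i s) * mu i s with hFdef
  have hFt : ∀ t, F t = (2/3) * ∑ i, (tau t / 2 + lam i t) * mu i t := fun t => rfl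
  have hdtauF : ∀ t ∈ I, HasDerivAt tau (F t) t := hdtau
  have hderiv1 : ∀ t ∈ I, deriv tau t = F t := fun t ht => (hdtauF t ht).deriv
  -- second derivative
  have hFd : ∀ t ∈ I, HasDerivAt F
      ((2/3) * ∑ i, ((F t / 2 + (tau t / 2 + lam i t) * mu i t) * mu i t
        + (tau t / 2 + lam i t) * ((mu i t) ^ 2 - tau t / 2 * lam i t + 0))) t := by
    intro t ht
    exact (HasDerivAt.fun_sum fun i _ =>
      (((hdtauF t ht).div_const 2).add (hode1 i t ht)).mul (hode2 i t ht)).const_mul (2/3 : ℝ)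
  have hdd : ∀ t ∈ I, deriv (deriv tau) t
      = (2/3) * ∑ i, ((F t / 2 + (tau t / 2 + lam i t) * mu i t) * mu i t
        + (tau t / 2 + lam i t) * ((mu i t) ^ 2 - tau t / 2 * lam i t + 0)) := by
    intro t ht
    have hev : deriv tau =ᶠ[nhds t] F :=
      Filter.eventuallyEq_of_mem (hI.mem_nhds ht) (fun s hs => hderiv1 s hs)
    rw [hev.deriv_eq]
    exact (hFd t ht).deriv
  -- the key algebraic relation on U
  have key2 : ∀ t ∈ U, (N+3)*(N-3)*(mu i0 t)^2 + N*(N+6)*(lam i0 t)^2 = 0 := by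
    intro t ht
    have ht1 := ht.1
    have hmu_all : ∀ i : Fin n₁, mu i t = mu i0 t := fun i => hall i i0 t ht1
    have hlam_all : ∀ i : Fin n₁, lam i t = lam i0 t := fun i => hlamEq i t ht
    have hx := hxU t ht
    have hl := hlU t ht
    have hsm : ∑ i, mu i t = N * mu i0 t := by
      rw [Finset.sum_congr rfl (fun i _ => hmu_all i)]; simp [hNdef, mul_comm]
    have hsl2 : ∑ i, (lam i t)^2 = N * (lam i0 t)^2 := by
      rw [Finset.sum_congr rfl (fun i _ => by rw [hlam_all i])]; simp [hNdef, mul_comm]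
    have hFteq : F t = (2/3) * (N * ((tau t / 2 + lam i0 t) * mu i0 t)) := by
      rw [hFt, Finset.sum_congr rfl (fun i _ => by rw [hlam_all i, hmu_all i])]
      simp [hNdef, mul_comm, mul_left_comm]
    have hGt : (2/3 : ℝ) * ∑ i, ((F t / 2 + (tau t / 2 + lam i t) * mu i t) * mu i t
        + (tau t / 2 + lam i t) * ((mu i t) ^ 2 - tau t / 2 * lam i t + 0))
        = (2/3) * (N * ((F t / 2 + (tau t / 2 + lam i0 t) * mu i0 t) * mu i0 t
        + (tau t / 2 + lam i0 t) * ((mu i0 t) ^ 2 - tau t / 2 * lam i0 t + 0))) := by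
      rw [Finset.sum_congr rfl (fun i _ => by rw [hlam_all i, hmu_all i]),
        Finset.sum_const, Finset.card_univ, Fintype.card_fin, nsmul_eq_mul]
    have heq := hode3 t ht1
    rw [hdd t ht1, hderiv1 t ht1, hsm, hsl2, hGt, hFteq, hx] at heq
    have key0 : N * (lam i0 t * ((N+3)*(N-3)*(mu i0 t)^2 + N*(N+6)*(lam i0 t)^2)) = 0 := by
      linear_combination (27/4) * heq
    have h1 := (mul_eq_zero.mp key0).resolve_left hNne
    exact (mul_eq_zero.mp h1).resolve_left hl
  -- the μ vanishes on U
  have key3 : ∀ t ∈ U, mu i0 t = 0 := by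
    intro t ht
    have ht1 := ht.1
    have hx := hxU t ht
    have hl := hlU t ht
    have hH0 : HasDerivAt (fun s => (N+3)*(N-3)*(mu i0 s)^2 + N*(N+6)*(lam i0 s)^2)
        (0 : ℝ) t := by
      refine (hasDerivAt_const t (0:ℝ)).congr_of_eventuallyEq ?_
      exact Filter.eventuallyEq_of_mem (hUopen.mem_nhds ht) (fun s hs => key2 s hs)
    have hH1 : HasDerivAt (fun s => (N+3)*(N-3)*(mu i0 s)^2 + N*(N+6)*(lam i0 s)^2)
        ((N+3)*(N-3) * ((2:ℕ) * (mu i0 t) ^ 1 * ((mu i0 t) ^ 2 - tau t / 2 * lam i0 t + 0))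
        + N*(N+6) * ((2:ℕ) * (lam i0 t) ^ 1 * ((tau t / 2 + lam i0 t) * mu i0 t))) t := by
      exact (((hode2 i0 t ht1).pow 2).const_mul ((N+3)*(N-3))).add
        (((hode1 i0 t ht1).pow 2).const_mul (N*(N+6)))
    have hval := hH1.unique hH0
    rw [hx] at hval
    have hstar := key2 t ht
    have key : mu i0 t * (N * ((2*N+3) * (lam i0 t)^2)) = 0 := by
      push_cast at hval
      linear_combination (1/2) * hval - (mu i0 t) * hstar
    have hne : N * ((2*N+3) * (lam i0 t)^2) ≠ 0 := by positivity
    exact (mul_eq_zero.mp key).resolve_right hne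
  -- final contradiction at t₀
  have hM0 : HasDerivAt (mu i0) (0 : ℝ) t₀ := by
    refine (hasDerivAt_const t₀ (0:ℝ)).congr_of_eventuallyEq ?_
    exact Filter.eventuallyEq_of_mem (hUopen.mem_nhds ht₀U) (fun s hs => key3 s hs)
  have huniq := (hode2 i0 t₀ ht₀I).unique hM0
  have hm0 := key3 t₀ ht₀U
  have hx0 := hxU t₀ ht₀U
  have hl0 := hlU t₀ ht₀U
  rw [hm0, hx0] at huniq
  have : N * (lam i0 t₀)^2 = 0 := by linear_combination (-3) * huniq
  have h2 := (mul_eq_zero.mp this).resolve_left hNne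
  exact hl0 (pow_eq_zero_iff two_ne_zero |>.mp h2)
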